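/- Let 0 < p⁻ ≤ p < p⁺ < 1 and let q be the random variable taking value p⁻ with probability ((p⁺ − p)/(p⁺(1 − p⁺)))/D and value p⁺ with probability ((p − p⁻)/(p⁻(1 − p⁻)))/D, where D := (p⁺ − p)/(p⁺(1 − p⁺)) + (p − p⁻)/(p⁻(1 − p⁻)). Then for the log loss ℓ(q, y) := −y·log q − (1 − y)·log(1 − q) and for every y ∈ {0,1}, E[ℓ(q, y)] − ℓ(p, y) ≤ (p⁺ − p⁻)²·max(1/(p⁻(1 − p⁻)), 1/(p⁺(1 − p⁺))). -/

import Mathlib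

/-- **Randomized rounding for the log loss (Lemma 6).**
Let `0 < p⁻ ≤ p < p⁺ < 1` and let `q` take value `p⁻` with probability
`((p⁺ − p)/(p⁺(1 − p⁺)))/D` and `p⁺` with probability `((p − p⁻)/(p⁻(1 − p⁻)))/D`.
Then for the log loss and every `y ∈ {0,1}`,
`E[ℓ(q, y)] − ℓ(p, y) ≤ (p⁺ − p⁻)²·max(1/(p⁻(1 − p⁻)), 1/(p⁺(1 − p⁺)))`. -/
theorem randomized_rounding_log_loss
    (pm p pp : ℝ) (h0 : 0 < pm) (h1 : pm ≤ p) (h2 : p < pp) (h3 : pp < 1)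
    (D : ℝ) (hD : D = (pp - p) / (pp * (1 - pp)) + (p - pm) / (pm * (1 - pm)))
    (ℓ : ℝ → ℝ → ℝ)
    (hℓ : ∀ q y, ℓ q y = -y * Real.log q - (1 - y) * Real.log (1 - q))
    (y : ℝ) (hy : y = 0 ∨ y = 1) :
    ((pp - p) / (pp * (1 - pp)) / D) * ℓ pm y
      + ((p - pm) / (pm * (1 - pm)) / D) * ℓ pp y - ℓ p y
    ≤ (pp - pm) ^ 2 * max (1 / (pm * (1 - pm))) (1 / (pp * (1 - pp))) := by
  have hpp : 0 < pp := lt_trans (lt_of_lt_of_le h0 h1) h2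
  have hp : 0 < p := lt_of_lt_of_le h0 h1
  have h1p : 0 < 1 - p := by linarith
  have h1pm : 0 < 1 - pm := by linarith
  have h1pp : 0 < 1 - pp := by linarith
  have hA : 0 < pp * (1 - pp) := mul_pos hpp h1pp
  have hB : 0 < pm * (1 - pm) := mul_pos h0 h1pm
  have ha : 0 < (pp - p) / (pp * (1 - pp)) := div_pos (by linarith) hA
  have hb : 0 ≤ (p - pm) / (pm * (1 - pm)) := div_nonneg (by linarith) hB.le
  have hDpos : 0 < D := by rw [hD]; linarith
  have hsum1 : (pp - p) / (pp * (1 - pp)) / D + (p - pm) / (pm * (1 - pm)) / D = 1 := by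
    rw [← add_div, hD, div_self (by rw [← hD]; exact hDpos.ne')]
  set T : ℝ := (pp - pm) ^ 2 * (1 / (pm * (1 - pm))) with hT
  have hTnn : 0 ≤ T := mul_nonneg (sq_nonneg _) (le_of_lt (by positivity))
  have hTmax : T ≤ (pp - pm) ^ 2 * max (1 / (pm * (1 - pm))) (1 / (pp * (1 - pp))) :=
    mul_le_mul_of_nonneg_left (le_max_left _ _) (sq_nonneg _)
  -- generic step: if the weighted algebraic bound sums to S, conclude
  have step : ∀ α β u v : ℝ, u ≤ α → v ≤ β →
      (pp - p) / (pp * (1 - pp)) * α + (p - pm) / (pm * (1 - pm)) * β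
        = (pp - p) * (p - pm) * (pp - pm) / ((1 - pm) * (1 - pp) * (pm * pp)) →
      ((pp - p) / (pp * (1 - pp)) / D) * u + ((p - pm) / (pm * (1 - pm)) / D) * v
        ≤ (pp - pm) ^ 2 * max (1 / (pm * (1 - pm))) (1 / (pp * (1 - pp))) := by
    intro α β u v hu hv hS
    refine le_trans ?_ hTmax
    have hmono : ((pp - p) / (pp * (1 - pp)) / D) * u + ((p - pm) / (pm * (1 - pm)) / D) * v
        ≤ ((pp - p) / (pp * (1 - pp)) / D) * α + ((p - pm) / (pm * (1 - pm)) / D) * β := by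
      have w1 : 0 ≤ (pp - p) / (pp * (1 - pp)) / D := le_of_lt (div_pos ha hDpos)
      have w2 : 0 ≤ (p - pm) / (pm * (1 - pm)) / D := div_nonneg hb hDpos.le
      gcongr
    refine le_trans hmono ?_
    have hkey : (pp - p) / (pp * (1 - pp)) * α + (p - pm) / (pm * (1 - pm)) * β ≤ T * D := by
      rw [hS, hD]
      have hTa : T * ((pp - p) / (pp * (1 - pp)))
          = (pp - pm) ^ 2 * (pp - p) / ((1 - pm) * (1 - pp) * (pm * pp)) := by
        rw [hT, mul_one_div, div_mul_div_comm]
        congr 1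
        ring
      have hnum : (pp - p) * (p - pm) * (pp - pm) ≤ (pp - pm) ^ 2 * (pp - p) := by
        nlinarith [mul_nonneg (mul_nonneg (by linarith : (0:ℝ) ≤ pp - p)
          (by linarith : (0:ℝ) ≤ pp - pm)) (by linarith : (0:ℝ) ≤ pp - p)]
      have h1 : (pp - p) * (p - pm) * (pp - pm) / ((1 - pm) * (1 - pp) * (pm * pp))
          ≤ (pp - pm) ^ 2 * (pp - p) / ((1 - pm) * (1 - pp) * (pm * pp)) := by
        exact div_le_div_of_nonneg_right hnum (by positivity)
      have h2 : T * ((p - pm) / (pm * (1 - pm))) ≥ 0 := mul_nonneg hTnn hb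
      calc (pp - p) * (p - pm) * (pp - pm) / ((1 - pm) * (1 - pp) * (pm * pp))
          ≤ (pp - pm) ^ 2 * (pp - p) / ((1 - pm) * (1 - pp) * (pm * pp)) := h1
        _ = T * ((pp - p) / (pp * (1 - pp))) := hTa.symm
        _ ≤ T * ((pp - p) / (pp * (1 - pp))) + T * ((p - pm) / (pm * (1 - pm))) := by linarith
        _ = T * ((pp - p) / (pp * (1 - pp)) + (p - pm) / (pm * (1 - pm))) := by ring
    have : ((pp - p) / (pp * (1 - pp)) / D) * α + ((p - pm) / (pm * (1 - pm)) / D) * β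
        = ((pp - p) / (pp * (1 - pp)) * α + (p - pm) / (pm * (1 - pm)) * β) / D := by
      ring
    rw [this, div_le_iff₀ hDpos]
    linarith [hkey]
  rcases hy with rfl | rfl
  · simp only [hℓ, neg_zero, zero_mul, sub_zero, one_mul, zero_sub, neg_mul]
    have e : ((pp - p) / (pp * (1 - pp)) / D) * (-(Real.log (1 - pm)))
        + ((p - pm) / (pm * (1 - pm)) / D) * (-(Real.log (1 - pp)))
        - (-(Real.log (1 - p)))
        = ((pp - p) / (pp * (1 - pp)) / D) * (Real.log (1 - p) - Real.log (1 - pm))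
        + ((p - pm) / (pm * (1 - pm)) / D) * (Real.log (1 - p) - Real.log (1 - pp)) := by
      linear_combination (-Real.log (1 - p)) * hsum1
    rw [e]
    apply step ((pm - p) / (1 - pm)) ((pp - p) / (1 - pp))
    · have h := Real.log_le_sub_one_of_pos (div_pos h1p h1pm)
      rw [Real.log_div h1p.ne' h1pm.ne'] at h
      have : (1 - p) / (1 - pm) - 1 = (pm - p) / (1 - pm) := by
        rw [div_sub_one h1pm.ne']; ring_nf
      linarith
    · have h := Real.log_le_sub_one_of_pos (div_pos h1p h1pp)
      rw [Real.log_div h1p.ne' h1pp.ne'] at h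
      have : (1 - p) / (1 - pp) - 1 = (pp - p) / (1 - pp) := by
        rw [div_sub_one h1pp.ne']; ring_nf
      linarith
    · field_simp; ring
  · simp only [hℓ, sub_self, zero_mul, sub_zero, neg_one_mul, neg_mul, one_mul]
    have e : ((pp - p) / (pp * (1 - pp)) / D) * (-(Real.log pm))
        + ((p - pm) / (pm * (1 - pm)) / D) * (-(Real.log pp))
        - (-(Real.log p))
        = ((pp - p) / (pp * (1 - pp)) / D) * (Real.log p - Real.log pm)
        + ((p - pm) / (pm * (1 - pm)) / D) * (Real.log p - Real.log pp) := by
      linear_combination (-Real.log p) * hsum1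
    rw [e]
    apply step ((p - pm) / pm) ((p - pp) / pp)
    · have h := Real.log_le_sub_one_of_pos (div_pos hp h0)
      rw [Real.log_div hp.ne' h0.ne'] at h
      have : p / pm - 1 = (p - pm) / pm := by rw [div_sub_one h0.ne']
      linarith
    · have h := Real.log_le_sub_one_of_pos (div_pos hp hpp)
      rw [Real.log_div hp.ne' hpp.ne'] at h
      have : p / pp - 1 = (p - pp) / pp := by rw [div_sub_one hpp.ne']
      linarith
    · field_simp; ring
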